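/- Let H, F be real Hilbert spaces, E : H → H* the Riesz isomorphism of a bounded coercive symmetric bilinear form, N : F → H* bounded linear and injective, and j ∈ H*. If (V, f, Π) solves the saddle point system E V + E Π = −j, N* Π = 0, E V − N f = 0, and additionally j = N g for some g ∈ F, then Π = 0 and V = −E^{-1} j. -/

import Mathlib

/-- Let `H, F` be real Hilbert spaces, `E : H → H*` the Riesz
map of a bounded, coercive, symmetric bilinear form, `N : F → H*` bounded
linear and injective with adjoint `N* : H → F`, and `j ∈ H*`. If `(V, f, P)`
solves the saddle-point system `E V + E P = -j`, `N* P = 0`, `E V - N f = 0`,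
and moreover `j = N g` for some `g ∈ F` (Hadamard structure), then `P = 0` and
`V = -E⁻¹ j` (i.e. `E V = -j`). -/
theorem saddle_point_multiplier_vanishes
    {H F : Type*}
    [NormedAddCommGroup H] [InnerProductSpace ℝ H] [CompleteSpace H]
    [NormedAddCommGroup F] [InnerProductSpace ℝ F] [CompleteSpace F]
    (E : H →L[ℝ] (H →L[ℝ] ℝ))
    (c : ℝ) (hc : 0 < c) (hcoer : ∀ v, c * ‖v‖ ^ 2 ≤ E v v)
    (hsym : ∀ v w, E v w = E w v)
    (N : F →L[ℝ] (H →L[ℝ] ℝ)) (hN : Function.Injective N)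
    (Nstar : H →L[ℝ] F) (hadj : ∀ (f : F) (w : H), N f w = (inner ℝ f (Nstar w) : ℝ))
    (j : H →L[ℝ] ℝ) (V : H) (f : F) (P : H)
    (h1 : E V + E P = -j) (h2 : Nstar P = 0) (h3 : E V = N f)
    (hj : ∃ g : F, j = N g) :
    P = 0 ∧ E V = -j := by
  obtain ⟨g, rfl⟩ := hj
  have hEP : E P P = 0 := by
    have hP : E P = -(N g) - N f := by
      have := eq_sub_of_add_eq' h1
      rw [h3] at this; rw [this]
    have h4 : E P P = -(N g P) - N f P := by rw [hP]; simp
    rw [h4, hadj, hadj, h2]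
    simp
  have hP0 : P = 0 := by
    have h := hcoer P
    rw [hEP] at h
    have hn : ‖P‖ ^ 2 = 0 := le_antisymm (by nlinarith) (sq_nonneg _)
    have : ‖P‖ = 0 := by nlinarith [norm_nonneg P]
    exact norm_eq_zero.mp this
  subst hP0
  simp at h1
  exact ⟨rfl, h1⟩
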